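/- Let G be a finite connected simple graph, r,c ∈ ℕ with c ≥ 1, and L a linear order on V(G) such that |WReach_{2r+1}[G,L,v]| ≤ c for every v ∈ V(G). Then for every distance-r dominating set M of G there exists a connected distance-r dominating set D' of G with |D'| ≤ c²·(2r+1)·|M|. -/

import Mathlib

/-- `u` is weakly `s`-reachable from `v` w.r.t. the linear order on `V`:
there is a path of length at most `s` between `u` and `v` on which `u` is minimum. -/
def wreach {V : Type*} [LinearOrder V] (G : SimpleGraph V) (s : ℕ) (v : V) : Set V :=
  {u | ∃ p : G.Walk u v, p.IsPath ∧ p.length ≤ s ∧ ∀ x ∈ p.support, u ≤ x}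

/-- The closed `r`-neighborhood `N_r[v]`. -/
def ball {V : Type*} (G : SimpleGraph V) (r : ℕ) (v : V) : Set V :=
  {u | ∃ p : G.Walk v u, p.length ≤ r}

/-- `D` is a distance-`r` dominating set. -/
def isRDom {V : Type*} (G : SimpleGraph V) (r : ℕ) (D : Set V) : Prop :=
  ∀ w : V, ∃ v ∈ D, w ∈ ball G r v

/-- Iterated relation: `RIter R n a b` means there is a chain of `n` `R`-steps from `a` to `b`. -/
private def RIter {V : Type*} (R : V → V → Prop) : ℕ → V → V → Prop
  | 0, a, b => a = b
  | n + 1, a, b => ∃ c, RIter R n a c ∧ R c b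

private lemma reflTransGen_exists_RIter {V : Type*} {R : V → V → Prop} {a b : V}
    (h : Relation.ReflTransGen R a b) : ∃ n, RIter R n a b := by
  induction h with
  | refl => exact ⟨0, rfl⟩
  | tail _ hbc ih => obtain ⟨n, hn⟩ := ih; exact ⟨n + 1, _, hn, hbc⟩

private lemma walk_support_getLast {V : Type*} {G : SimpleGraph V} {u v : V}
    (w : G.Walk u v) (h : w.support ≠ []) : w.support.getLast h = v := by
  induction w with
  | nil => rfl
  | @cons a b c hadj p ih =>
    exact (List.getLast_cons p.support_ne_nil).trans (ih p.support_ne_nil)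

/-- let `G` be connected with `|WReach_{2r+1}[G,L,v]| ≤ c` for all `v`
(`c ≥ 1`). Then for every distance-`r` dominating set `M` there is a connected
distance-`r` dominating set `D'` with `|D'| ≤ c²·(2r+1)·|M|`. -/
theorem stmt9 {V : Type*} [Fintype V] [LinearOrder V] (G : SimpleGraph V)
    (hG : G.Connected) (r c : ℕ) (hc1 : 1 ≤ c)
    (hc : ∀ v : V, (wreach G (2 * r + 1) v).ncard ≤ c)
    (M : Set V) (hM : isRDom G r M) :
    ∃ D' : Set V, isRDom G r D' ∧ (G.induce D').Connected ∧
      D'.ncard ≤ c ^ 2 * (2 * r + 1) * M.ncard := by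
  classical
  have hne : Nonempty V := hG.nonempty
  obtain ⟨m0, hm0, -⟩ := hM (Classical.arbitrary V)
  set R : V → V → Prop :=
    fun a b => a ∈ M ∧ b ∈ M ∧ ∃ p : G.Walk a b, p.length ≤ 2 * r + 1 with hRdef
  set P : V → Prop :=
    fun w => ∃ m, m ∈ M ∧ Relation.ReflTransGen R m0 m ∧ ∃ p : G.Walk m w, p.length ≤ r
    with hPdef
  have step : ∀ u x : V, G.Adj u x → P u → P x := by
    rintro u x hadj ⟨m, hm, hch, p, hp⟩
    obtain ⟨m', hm', q, hq⟩ := hM x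
    refine ⟨m', hm', ?_, q, hq⟩
    refine hch.tail ⟨hm, hm', (p.append ((SimpleGraph.Walk.cons hadj .nil))).append q.reverse, ?_⟩
    simp only [SimpleGraph.Walk.length_append, SimpleGraph.Walk.length_cons,
      SimpleGraph.Walk.length_nil, SimpleGraph.Walk.length_reverse]
    omega
  have walkP : ∀ u w : V, G.Walk u w → P u → P w := by
    intro u w q
    induction q with
    | nil => exact id
    | cons h q ih => exact fun hu => ih (step _ _ h hu)
  have key : ∀ w : V, P w := by
    intro w
    exact walkP m0 w (hG.preconnected m0 w).some
      ⟨m0, hm0, .refl, .nil, by simp⟩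
  have hchain : ∀ m ∈ M, Relation.ReflTransGen R m0 m := by
    intro m hm
    obtain ⟨m', hm', hch, p, hp⟩ := key m
    exact hch.tail ⟨hm', hm, p, by omega⟩
  have hEx : ∀ m ∈ M, ∃ n, RIter R n m0 m :=
    fun m hm => reflTransGen_exists_RIter (hchain m hm)
  set depth : V → ℕ :=
    fun m => if h : ∃ n, RIter R n m0 m then Nat.find h else 0 with hdepthdef
  have hpar : ∀ m, m ∈ M → m ≠ m0 →
      ∃ p : V, ∃ w : G.Walk p m, p ∈ M ∧ w.length ≤ 2 * r + 1 ∧ depth p < depth m := by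
    intro m hm hne0
    have h := hEx m hm
    have hspec := Nat.find_spec h
    cases hn : Nat.find h with
    | zero =>
      rw [hn] at hspec
      exact absurd hspec.symm hne0
    | succ k =>
      rw [hn] at hspec
      obtain ⟨p, hpk, hpM, hmM, w, hw⟩ := hspec
      refine ⟨p, w, hpM, hw, ?_⟩
      have hp' : ∃ n, RIter R n m0 p := ⟨k, hpk⟩
      have h1 : depth p ≤ k := by
        simp only [hdepthdef, dif_pos hp']
        exact Nat.find_min' hp' hpk
      have h2 : depth m = k + 1 := by
        simp only [hdepthdef, dif_pos h, hn]
      omega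
  choose par wk hparM hlen hdepth using hpar
  set T : V → G.Subgraph := fun m =>
    if h : m ∈ M ∧ m ≠ m0 then (wk m h.1 h.2).toSubgraph else G.singletonSubgraph m0
    with hTdef
  set H' : G.Subgraph := ⨆ m ∈ M, T m with hH'def
  have hverts : H'.verts = ⋃ m ∈ M, (T m).verts := by
    simp [hH'def, SimpleGraph.Subgraph.verts_iSup]
  have hmemT : ∀ m ∈ M, m ∈ (T m).verts := by
    intro m hm
    by_cases h : m = m0
    · subst h
      simp only [hTdef, dif_neg (fun hh : m ∈ M ∧ m ≠ m => hh.2 rfl)]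
      simp [SimpleGraph.singletonSubgraph_verts]
    · simp only [hTdef, dif_pos (⟨hm, h⟩ : m ∈ M ∧ m ≠ m0)]
      exact SimpleGraph.Walk.end_mem_verts_toSubgraph _
  have hMsub : M ⊆ H'.verts := by
    intro m hm
    rw [hverts]
    exact Set.mem_biUnion hm (hmemT m hm)
  have hm0v : m0 ∈ H'.verts := hMsub hm0
  have hTle : ∀ m ∈ M, T m ≤ H' := by
    intro m hm
    exact le_iSup₂ (f := fun m _ => T m) m hm
  have hTconn : ∀ m, (T m).Connected := by
    intro m
    by_cases h : m ∈ M ∧ m ≠ m0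
    · simp only [hTdef, dif_pos h]
      exact SimpleGraph.Walk.toSubgraph_connected _
    · simp only [hTdef, dif_neg h]
      exact SimpleGraph.Subgraph.singletonSubgraph_connected
  have hTvsub : ∀ m, m ∈ M → (T m).verts ⊆ H'.verts := by
    intro m hm x hx
    rw [hverts]
    exact Set.mem_biUnion hm hx
  have reachT : ∀ m (hm : m ∈ M), ∀ x y (hx : x ∈ (T m).verts) (hy : y ∈ (T m).verts)
      (hx' : x ∈ H'.verts) (hy' : y ∈ H'.verts),
      H'.coe.Reachable ⟨x, hx'⟩ ⟨y, hy'⟩ := by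
    intro m hm x y hx hy hx' hy'
    exact ((hTconn m).coe ⟨x, hx⟩ ⟨y, hy⟩).map (SimpleGraph.Subgraph.inclusion (hTle m hm))
  have reach0 : ∀ n m (hm : m ∈ M), depth m ≤ n →
      H'.coe.Reachable ⟨m, hMsub hm⟩ ⟨m0, hm0v⟩ := by
    intro n
    induction n with
    | zero =>
      intro m hm hd
      have h := hEx m hm
      have hd0 : depth m = 0 := Nat.le_zero.mp hd
      simp only [hdepthdef, dif_pos h] at hd0
      have h2 := Nat.find_spec h
      rw [hd0] at h2
      have h3 : m0 = m := h2
      subst h3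
      rfl
    | succ n ih =>
      intro m hm hd
      by_cases h0 : m = m0
      · subst h0; rfl
      · have hpM := hparM m hm h0
        have hx : par m hm h0 ∈ (T m).verts := by
          simp only [hTdef, dif_pos (⟨hm, h0⟩ : m ∈ M ∧ m ≠ m0)]
          exact SimpleGraph.Walk.start_mem_verts_toSubgraph _
        have hy : m ∈ (T m).verts := hmemT m hm
        have r1 := reachT m hm m (par m hm h0) hy hx (hMsub hm) (hMsub hpM)
        have r2 := ih (par m hm h0) hpM (by have := hdepth m hm h0; omega)
        exact r1.trans r2
  have hH'conn : H'.Connected := by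
    rw [SimpleGraph.Subgraph.connected_iff']
    rw [SimpleGraph.connected_iff_exists_forall_reachable]
    refine ⟨⟨m0, hm0v⟩, ?_⟩
    rintro ⟨x, hx⟩
    have hx2 := hx
    rw [hverts] at hx2
    obtain ⟨m, hm, hxm⟩ := Set.mem_iUnion₂.mp hx2
    have r1 : H'.coe.Reachable ⟨x, hx⟩ ⟨m, hMsub hm⟩ :=
      reachT m hm x m hxm (hmemT m hm) hx (hMsub hm)
    exact (r1.trans (reach0 (depth m) m hm le_rfl)).symm
  refine ⟨H'.verts, ?_, hH'conn.induce_verts, ?_⟩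
  · intro w
    obtain ⟨v, hv, hvb⟩ := hM w
    exact ⟨v, hMsub hv, hvb⟩
  · -- counting
    set intr : V → Set V := fun m =>
      if h : m ∈ M ∧ m ≠ m0 then {x | x ∈ (wk m h.1 h.2).support.tail.dropLast} else ∅
      with hintrdef
    have hTsub : ∀ m ∈ M, (T m).verts ⊆ M ∪ intr m := by
      intro m hm x hx
      by_cases h : m ∈ M ∧ m ≠ m0
      · simp only [hTdef, dif_pos h] at hx
        rw [SimpleGraph.Walk.mem_verts_toSubgraph] at hx
        set w := wk m h.1 h.2 with hwdef
        rw [SimpleGraph.Walk.support_eq_cons] at hx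
        rcases List.mem_cons.mp hx with h1 | h1
        · exact Or.inl (h1 ▸ hparM m h.1 h.2)
        · have htne : w.support.tail ≠ [] := List.ne_nil_of_mem h1
          rw [← List.dropLast_append_getLast htne] at h1
          rcases List.mem_append.mp h1 with h2 | h2
          · right
            simp only [hintrdef, dif_pos h]
            exact h2
          · have h3 : x = w.support.tail.getLast htne := List.mem_singleton.mp h2
            have h4 : w.support.tail.getLast htne = m := by
              rw [List.getLast_tail]
              exact walk_support_getLast w _
            rw [h3, h4]
            exact Or.inl hm
      · simp only [hTdef, dif_neg h, SimpleGraph.singletonSubgraph_verts,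
          Set.mem_singleton_iff] at hx
        exact Or.inl (hx ▸ hm0)
    have hintru : ∀ m, (intr m).ncard ≤ 2 * r := by
      intro m
      by_cases h : m ∈ M ∧ m ≠ m0
      · simp only [hintrdef, dif_pos h]
        set l := (wk m h.1 h.2).support.tail.dropLast with hldef
        have h1 : {x | x ∈ l} = (l.toFinset : Set V) := by
          ext x; simp
        rw [h1, Set.ncard_coe_finset]
        calc l.toFinset.card ≤ l.length := List.toFinset_card_le l
          _ ≤ 2 * r := by
            have h2 : l.length = (wk m h.1 h.2).support.tail.length - 1 := by
              rw [hldef, List.length_dropLast]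
            have h3 : (wk m h.1 h.2).support.length = (wk m h.1 h.2).length + 1 :=
              SimpleGraph.Walk.length_support _
            have h4 : (wk m h.1 h.2).support.tail.length
                = (wk m h.1 h.2).support.length - 1 := List.length_tail
            have h5 := hlen m h.1 h.2
            omega
      · simp only [hintrdef, dif_neg h]
        simp
    have hsub : H'.verts ⊆ M ∪ ⋃ m ∈ M, intr m := by
      rw [hverts]
      intro x hx
      obtain ⟨m, hm, hxm⟩ := Set.mem_iUnion₂.mp hx
      rcases hTsub m hm hxm with h | h
      · exact Or.inl h
      · exact Or.inr (Set.mem_biUnion hm h)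
    have hAcard : (⋃ m ∈ M, intr m).ncard ≤ M.ncard * (2 * r) := by
      have h1 : (⋃ m ∈ M, intr m) =
          ((M.toFinset.biUnion fun m => (intr m).toFinset : Finset V) : Set V) := by
        ext x
        simp [Set.mem_iUnion₂]
      rw [h1, Set.ncard_coe_finset]
      calc (M.toFinset.biUnion fun m => (intr m).toFinset).card
          ≤ ∑ m ∈ M.toFinset, (intr m).toFinset.card := Finset.card_biUnion_le
        _ ≤ ∑ _m ∈ M.toFinset, 2 * r := by
            refine Finset.sum_le_sum ?_
            intro m _
            rw [← Set.ncard_eq_toFinset_card']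
            exact hintru m
        _ = M.ncard * (2 * r) := by
            rw [Finset.sum_const, smul_eq_mul, Set.ncard_eq_toFinset_card']
    have hcc : 1 ≤ c ^ 2 := Nat.one_le_pow _ _ (by omega)
    calc H'.verts.ncard ≤ (M ∪ ⋃ m ∈ M, intr m).ncard :=
          Set.ncard_le_ncard hsub (Set.toFinite _)
      _ ≤ M.ncard + (⋃ m ∈ M, intr m).ncard := Set.ncard_union_le _ _
      _ ≤ M.ncard + M.ncard * (2 * r) := by omega
      _ = (2 * r + 1) * M.ncard := by ring
      _ ≤ c ^ 2 * ((2 * r + 1) * M.ncard) := Nat.le_mul_of_pos_left _ (by omega)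
      _ = c ^ 2 * (2 * r + 1) * M.ncard := by ring
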